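/- The pair (α_n, β_n) with α_0 = 1, α_n = 2(-1)^n q^{n^2} for n ≥ 1, and β_n = (q; q^2)_n^2 / (q^2; q^2)_{2n}, is a Bailey pair relative to (1, q^2); that is, for all n ≥ 0, β_n = ∑_{r=0}^n α_r / ((q^2; q^2)_{n-r} (q^2; q^2)_{n+r}). -/
import Mathlib


/-- The infinite q-Pochhammer symbol `(a; q)_∞ = ∏_{j ≥ 0} (1 - a q^j)`. -/
noncomputable def qPochInf (a q : ℂ) : ℂ := ∏' j : ℕ, (1 - a * q ^ j)

/-- The finite q-Pochhammer symbol `(a; q)_n = ∏_{j = 0}^{n-1} (1 - a q^j)`. -/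
noncomputable def qPoch (a q : ℂ) (n : ℕ) : ℂ := ∏ j ∈ Finset.range n, (1 - a * q ^ j)

/-- Gaussian binomial, via Pascal's rule `c_{m+1,j} = Q^j c_{m,j} + c_{m,j-1}`. -/
noncomputable def gb (Q : ℂ) : ℕ → ℕ → ℂ
  | 0, 0 => 1
  | 0, _+1 => 0
  | _+1, 0 => 1
  | m+1, j+1 => Q ^ (j+1) * gb Q m (j+1) + gb Q m j

lemma gb_zero_right (Q : ℂ) (m : ℕ) : gb Q m 0 = 1 := by cases m <;> rfl

lemma gb_of_lt (Q : ℂ) : ∀ {m j : ℕ}, m < j → gb Q m j = 0 := by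
  intro m
  induction m with
  | zero => intro j hj; match j, hj with | j+1, _ => rfl
  | succ m ih =>
    intro j hj
    match j, hj with
    | j+1, hj =>
      show Q ^ (j+1) * gb Q m (j+1) + gb Q m j = 0
      rw [ih (by omega), ih (by omega)]; ring

lemma gb_diag (Q : ℂ) (m : ℕ) : gb Q m m = 1 := by
  induction m with
  | zero => rfl
  | succ m ih =>
    show Q ^ (m+1) * gb Q m (m+1) + gb Q m m = 1
    rw [gb_of_lt Q (by omega), ih]; ring

lemma qPoch_zero (a q : ℂ) : qPoch a q 0 = 1 := by simp [qPoch]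

lemma qPoch_succ (a q : ℂ) (n : ℕ) : qPoch a q (n+1) = qPoch a q n * (1 - a * q ^ n) :=
  Finset.prod_range_succ _ _

lemma qPoch_succ' (a q : ℂ) (n : ℕ) : qPoch a q (n+1) = (1 - a) * qPoch (a*q) q n := by
  rw [qPoch, Finset.prod_range_succ']
  simp only [pow_zero, mul_one, qPoch]
  rw [mul_comm]
  congr 1
  apply Finset.prod_congr rfl
  intro i _
  ring

lemma gb_mul_key (Q : ℂ) : ∀ {m j : ℕ}, j ≤ m →
    gb Q m j * (qPoch Q Q j * qPoch Q Q (m - j)) = qPoch Q Q m := by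
  intro m
  induction m with
  | zero => intro j hj; interval_cases j; simp [gb_zero_right, qPoch_zero]
  | succ m ih =>
    intro j hj
    rcases Nat.eq_zero_or_pos j with rfl | hj0
    · simp [gb_zero_right, qPoch_zero]
    rcases eq_or_lt_of_le hj with rfl | hjm
    · rw [gb_diag, Nat.sub_self, qPoch_zero]; ring
    obtain ⟨j, rfl⟩ := Nat.exists_eq_succ_of_ne_zero (Nat.pos_iff_ne_zero.mp hj0)
    obtain ⟨k, rfl⟩ : ∃ k, m = j + 1 + k := ⟨m - (j+1), by omega⟩
    have h1 : j + 1 + k + 1 - (j + 1) = k + 1 := by omega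
    have h2 : j + 1 + k - (j + 1) = k := by omega
    have h3 : j + 1 + k - j = k + 1 := by omega
    show (Q ^ (j+1) * gb Q (j+1+k) (j+1) + gb Q (j+1+k) j) *
        (qPoch Q Q (j+1) * qPoch Q Q (j+1+k+1 - (j+1))) = _
    have e1 := ih (show j + 1 ≤ j + 1 + k by omega)
    have e2 := ih (show j ≤ j + 1 + k by omega)
    rw [h2] at e1
    rw [h3, qPoch_succ] at e2
    rw [h1, qPoch_succ, qPoch_succ]
    have hpow : Q ^ (j+1) * (Q * Q ^ k) = Q * Q ^ (j+1+k) := by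
      rw [← pow_succ', ← pow_succ', ← pow_add]; ring_nf
    rw [qPoch_succ] at *
    linear_combination ((1 - Q * Q^k) * Q^(j+1)) * e1 + (1 - Q * Q^j) * e2
      - qPoch Q Q (j+1+k) * hpow

lemma gb_symm (Q : ℂ) (hne : ∀ k, qPoch Q Q k ≠ 0) {m j : ℕ} (h : j ≤ m) :
    gb Q m j = gb Q m (m - j) := by
  have e1 := gb_mul_key Q h
  have e2 := gb_mul_key Q (Nat.sub_le m j)
  rw [Nat.sub_sub_self h] at e2
  have hd : qPoch Q Q j * qPoch Q Q (m - j) ≠ 0 := mul_ne_zero (hne _) (hne _)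
  field_simp at e1 e2
  rw [← e2] at e1
  exact mul_right_cancel₀ hd (by linear_combination e1)

lemma qbinom (Q : ℂ) (m : ℕ) : ∀ x : ℂ,
    ∑ j ∈ Finset.range (m+1), (-1)^j * Q^(j.choose 2) * x^j * gb Q m j = qPoch x Q m := by
  induction m with
  | zero => intro x; simp [qPoch_zero]; rfl
  | succ m ih =>
    intro x
    have key : ∀ j ∈ Finset.range (m+2), (-1:ℂ)^j * Q^(j.choose 2) * x^j * gb Q (m+1) j
        = (-1)^j * Q^(j.choose 2) * (x*Q)^j * gb Q m j
          + (if j = 0 then 0 else (-1)^j * Q^(j.choose 2) * x^j * gb Q m (j-1)) := by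
      intro j _
      match j with
      | 0 => simp [gb_zero_right]
      | j+1 =>
        show _ * (Q ^ (j+1) * gb Q m (j+1) + gb Q m j) = _
        simp only [if_neg (Nat.succ_ne_zero j), Nat.add_sub_cancel, mul_pow]
        ring
    rw [Finset.sum_congr rfl key, Finset.sum_add_distrib]
    have s1 : ∑ j ∈ Finset.range (m+2), (-1:ℂ)^j * Q^(j.choose 2) * (x*Q)^j * gb Q m j
        = qPoch (x*Q) Q m := by
      rw [Finset.sum_range_succ, gb_of_lt Q (by omega)]
      rw [mul_zero, add_zero, ih (x*Q)]
    have s2 : ∑ j ∈ Finset.range (m+2),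
        (if j = 0 then (0:ℂ) else (-1)^j * Q^(j.choose 2) * x^j * gb Q m (j-1))
        = -x * qPoch (x*Q) Q m := by
      rw [Finset.sum_range_succ']
      simp only [if_neg (Nat.succ_ne_zero _), if_true, add_zero, Nat.add_sub_cancel]
      rw [← ih (x*Q), Finset.mul_sum]
      apply Finset.sum_congr rfl
      intro i _
      have hc : (i+1).choose 2 = i + i.choose 2 := by
        rw [Nat.choose_succ_succ, Nat.choose_one_right]
      rw [hc, pow_add, mul_pow]
      ring
    rw [s1, s2, qPoch_succ']
    ring

lemma choose_two_int (m : ℕ) : ((m.choose 2 : ℕ) : ℤ) * 2 = (m : ℤ) * (m - 1) := by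
  induction m with
  | zero => simp
  | succ m ih =>
    rw [Nat.choose_succ_succ, Nat.choose_one_right]
    push_cast at ih ⊢
    linear_combination ih

lemma neg_prod (q : ℂ) (n : ℕ) :
    (-1:ℂ)^n * q^(n^2) = ∏ i ∈ Finset.range n, (-(q*(q^2)^i)) := by
  induction n with
  | zero => simp
  | succ n ih =>
    rw [Finset.prod_range_succ, ← ih]
    have h1 : q^((n+1)^2) = q^(n^2) * (q^2)^n * q := by
      rw [← pow_mul, ← pow_add, ← pow_succ]
      congr 1
      ring
    rw [pow_succ, h1]
    ring

lemma main_sum (q : ℂ) (hq0 : q ≠ 0) (hfac : ∀ k, qPoch (q^2) (q^2) k ≠ 0) (n : ℕ) :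
    ∑ r ∈ Finset.range (n+1),
      (if r = 0 then (1:ℂ) else 2*(-1)^r*q^(r^2)) * gb (q^2) (2*n) (n+r)
    = qPoch q (q^2) n ^ 2 := by
  set x : ℂ := q ^ ((1 : ℤ) - 2*n) with hx
  -- generic power computation
  have hxpow : ∀ k : ℕ, x ^ k = q ^ (((1:ℤ) - 2*n) * k) := by
    intro k
    rw [hx, ← zpow_natCast (q ^ ((1:ℤ) - 2*n)) k, ← zpow_mul]
  -- claim A : for j = n + r
  have claimA : ∀ r : ℕ, (-1:ℂ)^n * q^(n^2) *
      ((-1)^(n+r) * (q^2)^((n+r).choose 2) * x^(n+r) * gb (q^2) (2*n) (n+r))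
      = (-1)^r * q^(r^2) * gb (q^2) (2*n) (n+r) := by
    intro r
    have hsgn : (-1:ℂ)^n * (-1)^(n+r) = (-1)^r := by
      rw [← pow_add, show n + (n+r) = 2*n + r by ring, pow_add, pow_mul, neg_one_sq, one_pow,
        one_mul]
    have hpow : q^(n^2) * ((q^2)^((n+r).choose 2) * x^(n+r)) = q^(r^2) := by
      rw [hxpow, ← pow_mul, ← mul_assoc, ← pow_add,
        ← zpow_natCast q (n^2 + 2*((n+r).choose 2)),
        ← zpow_add₀ hq0, ← zpow_natCast q (r^2)]
      congr 1
      have := choose_two_int (n+r)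
      push_cast at this ⊢
      linear_combination this
    calc (-1:ℂ)^n * q^(n^2) * ((-1)^(n+r) * (q^2)^((n+r).choose 2) * x^(n+r) * gb (q^2) (2*n) (n+r))
        = ((-1:ℂ)^n * (-1)^(n+r)) * (q^(n^2) * ((q^2)^((n+r).choose 2) * x^(n+r)))
            * gb (q^2) (2*n) (n+r) := by ring
      _ = _ := by rw [hsgn, hpow]
  -- claim B : for j = n - r, r ≤ n
  have claimB : ∀ r : ℕ, r ≤ n → (-1:ℂ)^n * q^(n^2) *
      ((-1)^(n-r) * (q^2)^((n-r).choose 2) * x^(n-r) * gb (q^2) (2*n) (n-r))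
      = (-1)^r * q^(r^2) * gb (q^2) (2*n) (n+r) := by
    intro r hr
    have hgb : gb (q^2) (2*n) (n-r) = gb (q^2) (2*n) (n+r) := by
      have := gb_symm (q^2) hfac (show n - r ≤ 2*n by omega)
      rwa [show 2*n - (n-r) = n + r by omega] at this
    obtain ⟨s, rfl⟩ : ∃ s, n = r + s := ⟨n - r, by omega⟩
    have hnr : r + s - r = s := by omega
    rw [hgb, hnr]
    have hsgn : (-1:ℂ)^(r+s) * (-1)^s = (-1)^r := by
      rw [← pow_add, show r + s + s = r + 2*s by ring, pow_add, pow_mul, neg_one_sq,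
        one_pow, mul_one]
    have hpow : q^((r+s)^2) * ((q^2)^(s.choose 2) * x^s) = q^(r^2) := by
      rw [hxpow, ← pow_mul, ← mul_assoc, ← pow_add,
        ← zpow_natCast q ((r+s)^2 + 2*(s.choose 2)),
        ← zpow_add₀ hq0, ← zpow_natCast q (r^2)]
      congr 1
      have := choose_two_int s
      push_cast at this ⊢
      linear_combination this
    calc (-1:ℂ)^(r+s) * q^((r+s)^2) *
        ((-1)^s * (q^2)^(s.choose 2) * x^s * gb (q^2) (2*(r+s)) ((r+s)+r))
        = ((-1:ℂ)^(r+s) * (-1)^s) * (q^((r+s)^2) * ((q^2)^(s.choose 2) * x^s))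
            * gb (q^2) (2*(r+s)) ((r+s)+r) := by ring
      _ = _ := by rw [hsgn, hpow]
  -- the transformed q-binomial sum
  have hqb := qbinom (q^2) (2*n) x
  have hS : ∑ j ∈ Finset.range (2*n+1),
      (-1:ℂ)^n * q^(n^2) * ((-1)^j * (q^2)^(j.choose 2) * x^j * gb (q^2) (2*n) j)
      = (-1:ℂ)^n * q^(n^2) * qPoch x (q^2) (2*n) := by
    rw [← Finset.mul_sum, hqb]
  -- split the sum
  rw [show 2*n+1 = (n+1) + n by ring, Finset.sum_range_add] at hS
  have refl1 : ∑ j ∈ Finset.range (n+1),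
      (-1:ℂ)^n * q^(n^2) * ((-1)^j * (q^2)^(j.choose 2) * x^j * gb (q^2) (2*n) j)
      = ∑ r ∈ Finset.range (n+1), (-1:ℂ)^r * q^(r^2) * gb (q^2) (2*n) (n+r) := by
    rw [← Finset.sum_range_reflect]
    apply Finset.sum_congr rfl
    intro r hr
    have hr' : r ≤ n := by have := Finset.mem_range.mp hr; omega
    rw [show n + 1 - 1 - r = n - r by omega]
    exact claimB r hr'
  have refl2 : ∑ i ∈ Finset.range n,
      (-1:ℂ)^n * q^(n^2) * ((-1)^((n+1)+i) * (q^2)^(((n+1)+i).choose 2) * x^((n+1)+i)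
        * gb (q^2) (2*n) ((n+1)+i))
      = ∑ i ∈ Finset.range n, (-1:ℂ)^(i+1) * q^((i+1)^2) * gb (q^2) (2*n) (n+(i+1)) := by
    apply Finset.sum_congr rfl
    intro i _
    rw [show (n+1)+i = n + (i+1) by ring]
    exact claimA (i+1)
  rw [refl1, refl2] at hS
  -- evaluate the product side
  have P2 : ∏ i ∈ Finset.range n, (1 - x * (q^2)^(n+i)) = qPoch q (q^2) n := by
    apply Finset.prod_congr rfl
    intro i _
    congr 1
    rw [hx, ← pow_mul, ← zpow_natCast q (2*(n+i)), ← zpow_add₀ hq0,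
      show q * (q^2)^i = q^(2*i+1) from by rw [← pow_mul]; exact (pow_succ' q (2*i)).symm,
      ← zpow_natCast q (2*i+1)]
    congr 1
    omega
  have P1 : (-1:ℂ)^n * q^(n^2) * ∏ i ∈ Finset.range n, (1 - x * (q^2)^i)
      = qPoch q (q^2) n := by
    rw [neg_prod, ← Finset.prod_range_reflect (fun i => 1 - x*(q^2)^i) n,
      ← Finset.prod_mul_distrib]
    apply Finset.prod_congr rfl
    intro i hi
    have hi' : i < n := Finset.mem_range.mp hi
    have key : (q*(q^2)^i) * (x*(q^2)^(n-1-i)) = 1 := by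
      rw [show q*(q^2)^i = q^(2*i+1) from by rw [← pow_mul]; exact (pow_succ' q (2*i)).symm,
        hx, ← pow_mul, ← zpow_natCast q (2*i+1), ← zpow_natCast q (2*(n-1-i)),
        ← zpow_add₀ hq0, ← zpow_add₀ hq0]
      have h0 : ((2*i+1 : ℕ) : ℤ) + ((1 - 2*(n:ℤ)) + ((2*(n-1-i) : ℕ) : ℤ)) = 0 := by omega
      rw [h0, zpow_zero]
    linear_combination key
  have prodEq : (-1:ℂ)^n * q^(n^2) * qPoch x (q^2) (2*n) = qPoch q (q^2) n ^ 2 := by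
    rw [show 2*n = n + n from two_mul n, qPoch, Finset.prod_range_add]
    show (-1:ℂ)^n * q^(n^2) * ((∏ i ∈ Finset.range n, (1 - x * (q^2)^i)) *
      ∏ i ∈ Finset.range n, (1 - x * (q^2)^(n+i))) = _
    rw [P2, ← mul_assoc, P1]; ring
  rw [← prodEq, ← hS]
  have hsplit : ∀ i ∈ Finset.range n,
      (if i+1 = 0 then (1:ℂ) else 2*(-1)^(i+1)*q^((i+1)^2)) * gb (q^2) (2*n) (n+(i+1))
      = (-1:ℂ)^(i+1)*q^((i+1)^2)*gb (q^2) (2*n) (n+(i+1))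
        + (-1:ℂ)^(i+1)*q^((i+1)^2)*gb (q^2) (2*n) (n+(i+1)) := by
    intro i _
    rw [if_neg (Nat.succ_ne_zero i)]
    ring
  rw [Finset.sum_range_succ'
      (fun r => (if r = 0 then (1:ℂ) else 2*(-1)^r*q^(r^2)) * gb (q^2) (2*n) (n+r)) n,
    Finset.sum_range_succ'
      (fun r => (-1:ℂ)^r * q^(r^2) * gb (q^2) (2*n) (n+r)) n,
    Finset.sum_congr rfl hsplit, Finset.sum_add_distrib]
  simp only [if_true, pow_zero, one_mul]
  ring

/-- The pair `α_0 = 1`, `α_n = 2(-1)^n q^{n^2}` (n ≥ 1),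
`β_n = (q;q^2)_n^2/(q^2;q^2)_{2n}` is a Bailey pair relative to `(1, q^2)`. -/
theorem bailey_pair (q : ℂ) (hq : ‖q‖ < 1) (n : ℕ) :
    qPoch q (q ^ 2) n ^ 2 / qPoch (q ^ 2) (q ^ 2) (2 * n) =
      ∑ r ∈ Finset.range (n + 1),
        (if r = 0 then (1 : ℂ) else 2 * (-1) ^ r * q ^ (r ^ 2)) /
          (qPoch (q ^ 2) (q ^ 2) (n - r) * qPoch (q ^ 2) (q ^ 2) (n + r)) := by
  have hfac : ∀ k, qPoch (q^2) (q^2) k ≠ 0 := by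
    intro k
    rw [qPoch]
    refine Finset.prod_ne_zero_iff.mpr fun j _ h => ?_
    have h1 : q^2 * (q^2)^j = 1 := by linear_combination -h
    have h2 : ‖q^2 * (q^2)^j‖ < 1 := by
      rw [← pow_succ', ← pow_mul, norm_pow]
      exact pow_lt_one₀ (norm_nonneg _) hq (by omega)
    rw [h1] at h2
    simp at h2
  rcases eq_or_ne q 0 with rfl | hq0
  · have e1 : ∀ k, qPoch ((0:ℂ)^2) ((0:ℂ)^2) k = 1 := by
      intro k; simp [qPoch]
    have e2 : qPoch (0:ℂ) ((0:ℂ)^2) n = 1 := by simp [qPoch]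
    simp only [e1, e2, one_pow, mul_one, div_one, one_mul]
    rw [Finset.sum_eq_single 0]
    · simp
    · intro r _ hr
      rw [if_neg hr, zero_pow (by positivity), mul_zero]
    · intro h; exact absurd (Finset.mem_range.mpr (by omega)) h
  · have step : ∀ r ∈ Finset.range (n+1),
        (if r = 0 then (1:ℂ) else 2*(-1)^r*q^(r^2)) /
          (qPoch (q^2) (q^2) (n-r) * qPoch (q^2) (q^2) (n+r))
        = (if r = 0 then (1:ℂ) else 2*(-1)^r*q^(r^2)) * gb (q^2) (2*n) (n+r)
            / qPoch (q^2) (q^2) (2*n) := by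
      intro r hr
      have hr' : r ≤ n := by have := Finset.mem_range.mp hr; omega
      have hk := gb_mul_key (q^2) (show n + r ≤ 2*n by omega)
      rw [show 2*n - (n+r) = n - r by omega] at hk
      rw [div_eq_div_iff (mul_ne_zero (hfac _) (hfac _)) (hfac _)]
      linear_combination -(if r = 0 then (1:ℂ) else 2*(-1)^r*q^(r^2)) * hk
    rw [Finset.sum_congr rfl step, ← Finset.sum_div, main_sum q hq0 hfac n]
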